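/- Let Q be a ground Horn program, k ∈ ℕ and 0 ≤ d ≤ k. Then: (i) the annotated atom (p^{=d}, a) is derivable in Q^{≤k} if and only if (p, a) has a derivation tree in Q of dimension exactly d; (ii) the annotated atom (p^{≤d}, a) is derivable in Q^{≤k} if and only if (p, a) has a derivation tree in Q of dimension at most d. -/

import Mathlib

/-- A labeled tree: a node carries a label and a (possibly empty) list of children. -/
inductive LTree (L : Type) : Type where
  | node : L → List (LTree L) → LTree L

namespace LTree

/-- The tree dimension: `0` for a leaf; otherwise the maximum `m` of the children's
dimensions if exactly one child attains `m`, and `m + 1` otherwise. -/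
def dim {L : Type} : LTree L → ℕ
  | node _ ts =>
    let ds := ts.attach.map fun x => dim x.1
    if ds = [] then 0
    else
      let m := ds.foldr max 0
      if ds.count m = 1 then m else m + 1
termination_by t => sizeOf t
decreasing_by
  have := List.sizeOf_lt_of_mem x.2
  simp_wf
  omega

end LTree

/-- A ground atom: a predicate symbol together with an argument tuple. -/
abbrev GAtom (P A : Type) := P × A

/-- A ground Horn rule: a head atom together with a finite list of body atoms. -/
abbrev GRule (P A : Type) := GAtom P A × List (GAtom P A)

/-- An atom is derivable in a ground Horn program `Q` if it is the head of a rule of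
`Q` all of whose body atoms are derivable. -/
inductive Derivable {P A : Type} (Q : Set (GRule P A)) : GAtom P A → Prop
  | intro (r : GRule P A) (hr : r ∈ Q) (hb : ∀ b ∈ r.2, Derivable Q b) :
      Derivable Q r.1

/-- `IsDeriv Q h T` : `T` is a derivation tree for the atom `h` in `Q`: its root label
is a rule `(h, [b₁,…,b_r]) ∈ Q` and its `r` children are derivation trees for
`b₁,…,b_r` in `Q`, respectively. -/
inductive IsDeriv {P A : Type} (Q : Set (GRule P A)) :
    GAtom P A → LTree (GRule P A) → Prop
  | node (r : GRule P A) (ts : List (LTree (GRule P A))) :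
      r ∈ Q → List.Forall₂ (IsDeriv Q) r.2 ts → IsDeriv Q r.1 (.node r ts)

/-- Annotated predicate symbols: `eq p d` stands for `p^{=d}` and `le p d` for `p^{≤d}`. -/
inductive Ann (P : Type) : Type where
  | eq (p : P) (d : ℕ)
  | le (p : P) (d : ℕ)

/-- The at-most-`k`-dimension program `Q^{≤k}` of a ground Horn program `Q`. -/
def kdim {P A : Type} (Q : Set (GRule P A)) (k : ℕ) : Set (GRule (Ann P) A) :=
  { R |
    -- (1) facts
    (∃ p a, ((p, a), ([] : List (GAtom P A))) ∈ Q ∧ R = ((Ann.eq p 0, a), [])) ∨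
    -- (1) linear rules
    (∃ p a q b d, d ≤ k ∧ ((p, a), [(q, b)]) ∈ Q ∧
      R = ((Ann.eq p d, a), [(Ann.eq q d, b)])) ∨
    -- (2a)
    (∃ p a B d j, ((p, a), B) ∈ Q ∧ 1 < B.length ∧ 1 ≤ d ∧ d ≤ k ∧ j < B.length ∧
      R = ((Ann.eq p d, a),
        (B.zipIdx.map Prod.swap).map fun x =>
          (if x.1 = j then Ann.eq x.2.1 d else Ann.le x.2.1 (d - 1), x.2.2))) ∨
    -- (2b)
    (∃ p a B d j₁ j₂, ((p, a), B) ∈ Q ∧ 1 < B.length ∧ 1 ≤ d ∧ d ≤ k ∧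
      j₁ < j₂ ∧ j₂ < B.length ∧
      R = ((Ann.eq p d, a),
        (B.zipIdx.map Prod.swap).map fun x =>
          (if x.1 = j₁ ∨ x.1 = j₂ then Ann.eq x.2.1 (d - 1) else Ann.le x.2.1 (d - 1),
            x.2.2))) ∨
    -- (3) ε-rules
    (∃ p a d e, e ≤ d ∧ d ≤ k ∧ R = ((Ann.le p d, a), [(Ann.eq p e, a)])) }

/-- Erase the annotation of an annotated atom. -/
def eraseAtom {P A : Type} : GAtom (Ann P) A → GAtom P A
  | (.eq p _, a) => (p, a)
  | (.le p _, a) => (p, a)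

/-- Erase the annotations of an annotated rule. -/
def eraseRule {P A : Type} (r : GRule (Ann P) A) : GRule P A :=
  (eraseAtom r.1, r.2.map eraseAtom)

/-- A rule of `Q^{≤k}` is an ε-rule precisely when its head predicate carries a
`≤`-annotation. -/
def isEpsRule {P A : Type} (r : GRule (Ann P) A) : Bool :=
  match r.1.1 with
  | .le _ _ => true
  | .eq _ _ => false

/-- The erasure of a derivation tree of `Q^{≤k}`: an ε-rule node (recognisable by its
`≤`-annotated head, and having exactly one child) is replaced by the erasure of its
child; at every other node the annotations of the rule labelling it are erased and the
children are erased recursively, in order. -/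
def erase {P A : Type} : LTree (GRule (Ann P) A) → LTree (GRule P A)
  | .node r ts =>
    if h : isEpsRule r ∧ ts.length = 1 then
      erase (ts.head (by rcases h with ⟨-, h2⟩; exact List.ne_nil_of_length_pos (by omega)))
    else .node (eraseRule r) (ts.attach.map fun x => erase x.1)
termination_by t => sizeOf t
decreasing_by
  · simp_wf
    have := List.sizeOf_lt_of_mem (List.head_mem (l := ts)
      (by rcases h with ⟨-, h2⟩; exact List.ne_nil_of_length_pos (by omega)))
    omega
  · have := List.sizeOf_lt_of_mem x.2
    simp_wf
    omega

namespace LTree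

lemma dim_node {L : Type} (r : L) (ts : List (LTree L)) :
    dim (.node r ts) =
      if ts.map dim = [] then 0
      else if (ts.map dim).count ((ts.map dim).foldr max 0) = 1
        then (ts.map dim).foldr max 0 else (ts.map dim).foldr max 0 + 1 := by
  rw [dim]
  have h : ts.attach.map (fun x => dim x.1) = ts.map dim := by
    rw [List.map_attach_eq_pmap]
    simp [Function.comp]
  simp only [h]


lemma foldr_le {ds : List ℕ} {m : ℕ} (h : ds ≠ []) (hle : ∀ x ∈ ds, x ≤ m) :
    ds.foldr max 0 ≤ m := by
  induction ds with
  | nil => simp at h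
  | cons a t ih =>
    rcases eq_or_ne t [] with rfl | ht
    · simpa using hle a (by simp)
    · simp only [List.foldr_cons, max_le_iff]
      exact ⟨hle a (by simp), ih ht fun x hx => hle x (List.mem_cons_of_mem _ hx)⟩

lemma le_foldr_max' {ds : List ℕ} {x : ℕ} (h : x ∈ ds) : x ≤ ds.foldr max 0 := by
  induction ds with
  | nil => simp at h
  | cons a t ih =>
    rcases List.mem_cons.mp h with rfl | h
    · simp [le_max_iff]
    · exact le_trans (ih h) (le_max_right _ _)

lemma foldr_max_mem {ds : List ℕ} (h : ds ≠ []) : ds.foldr max 0 ∈ ds := by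
  induction ds with
  | nil => simp at h
  | cons a t ih =>
    rcases eq_or_ne t [] with rfl | ht
    · simp
    · rcases le_or_gt (t.foldr max 0) a with hle | hlt
      · simp [max_eq_left hle]
      · simp only [List.foldr_cons, max_eq_right hlt.le]
        exact List.mem_cons_of_mem _ (ih ht)

lemma count_eq_one_iff' {ds : List ℕ} {m : ℕ} :
    ds.count m = 1 ↔ m ∈ ds ∧ ¬ ds.Duplicate m := by
  rw [List.duplicate_iff_two_le_count, ← List.count_pos_iff]
  omega

lemma dim_node_of_unique {L : Type} (r : L) (ts : List (LTree L)) (m j : ℕ)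
    (hj : j < ts.length) (hjm : (ts[j]).dim = m)
    (ho : ∀ i (hi : i < ts.length), i ≠ j → (ts[i]).dim < m) :
    dim (.node r ts) = m := by
  have hne : ts ≠ [] := List.ne_nil_of_length_pos (by omega)
  have hmem : m ∈ ts.map dim := by
    rw [List.mem_map]
    exact ⟨ts[j], List.getElem_mem hj, hjm⟩
  have hle : ∀ x ∈ ts.map dim, x ≤ m := by
    intro x hx
    obtain ⟨i, hi, rfl⟩ := List.mem_iff_getElem.mp hx
    rw [List.getElem_map]
    rcases eq_or_ne i j with rfl | hij
    · omega
    · exact (ho i (by simpa using hi) hij).le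
  have hfold : (ts.map dim).foldr max 0 = m :=
    le_antisymm (foldr_le (by simpa using hne) hle) (le_foldr_max' hmem)
  have hcount : (ts.map dim).count m = 1 := by
    rw [count_eq_one_iff']
    refine ⟨hmem, fun hdup => ?_⟩
    obtain ⟨n, m', hnm, h1, h2⟩ := List.duplicate_iff_exists_distinct_get.mp hdup
    have hn : (ts.map dim).get n = (ts[(n : ℕ)]'(by simpa using n.2)).dim := by
      simp [List.get_eq_getElem]
    have hm' : (ts.map dim).get m' = (ts[(m' : ℕ)]'(by simpa using m'.2)).dim := by
      simp [List.get_eq_getElem]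
    rcases eq_or_ne (n : ℕ) j with hnj | hnj
    · have : (m' : ℕ) ≠ j := by omega
      have := ho m' (by simpa using m'.2) this
      omega
    · have := ho n (by simpa using n.2) hnj
      omega
  rw [dim_node, if_neg (by simpa using hne), hfold, if_pos hcount]

lemma dim_node_of_two {L : Type} (r : L) (ts : List (LTree L)) (m j₁ j₂ : ℕ)
    (h12 : j₁ < j₂) (hj2 : j₂ < ts.length)
    (h1 : (ts[j₁]'(by omega)).dim = m) (h2 : (ts[j₂]).dim = m)
    (hle : ∀ i (hi : i < ts.length), (ts[i]).dim ≤ m) :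
    dim (.node r ts) = m + 1 := by
  have hne : ts ≠ [] := List.ne_nil_of_length_pos (by omega)
  have hmem : m ∈ ts.map dim := by
    rw [List.mem_map]
    exact ⟨ts[j₂], List.getElem_mem hj2, h2⟩
  have hle' : ∀ x ∈ ts.map dim, x ≤ m := by
    intro x hx
    obtain ⟨i, hi, rfl⟩ := List.mem_iff_getElem.mp hx
    rw [List.getElem_map]
    exact hle i (by simpa using hi)
  have hfold : (ts.map dim).foldr max 0 = m :=
    le_antisymm (foldr_le (by simpa using hne) hle') (le_foldr_max' hmem)
  have hcount : (ts.map dim).count m ≠ 1 := by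
    have hdup : (ts.map dim).Duplicate m := by
      rw [List.duplicate_iff_exists_distinct_get]
      refine ⟨⟨j₁, by simpa using (by omega : j₁ < ts.length)⟩,
        ⟨j₂, by simpa using hj2⟩, by simpa using h12, ?_, ?_⟩ <;>
        simp [List.get_eq_getElem, h1, h2]
    rw [List.duplicate_iff_two_le_count] at hdup
    omega
  rw [dim_node, if_neg (by simpa using hne), hfold, if_neg hcount]

lemma dim_node_cases {L : Type} (r : L) (ts : List (LTree L)) (h : ts ≠ []) :
    (∃ j, ∃ hj : j < ts.length, (ts[j]).dim = dim (.node r ts) ∧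
      ∀ i (hi : i < ts.length), i ≠ j → (ts[i]).dim < dim (.node r ts)) ∨
    (∃ m, dim (.node r ts) = m + 1 ∧ (∀ i (hi : i < ts.length), (ts[i]).dim ≤ m) ∧
      ∃ j₁ j₂, ∃ h12 : j₁ < j₂, ∃ hj2 : j₂ < ts.length,
        (ts[j₁]'(by omega)).dim = m ∧ (ts[j₂]).dim = m) := by
  set ds := ts.map dim with hds
  have hne : ds ≠ [] := by simpa [hds] using h
  set m := ds.foldr max 0 with hm
  have hmem : m ∈ ds := foldr_max_mem hne
  have hlem : ∀ i (hi : i < ts.length), (ts[i]).dim ≤ m := by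
    intro i hi
    exact le_foldr_max' (by rw [hds, List.mem_map]; exact ⟨ts[i], List.getElem_mem hi, rfl⟩)
  by_cases hc : ds.count m = 1
  · left
    have hdim : dim (.node r ts) = m := by
      rw [dim_node, if_neg hne, ← hds, ← hm, if_pos hc]
    obtain ⟨j, hj, hjm⟩ := List.mem_iff_getElem.mp hmem
    have hj' : j < ts.length := by simpa [hds] using hj
    have hjd : (ts[j]).dim = m := by
      have : ds[j]'hj = (ts[j]'hj').dim := by simp [hds]
      omega
    refine ⟨j, hj', by rw [hdim]; exact hjd, ?_⟩
    intro i hi hij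
    rw [hdim]
    rcases lt_or_eq_of_le (hlem i hi) with hlt | heq
    · exact hlt
    · exfalso
      have hdup : ds.Duplicate m := by
        rw [List.duplicate_iff_exists_distinct_get]
        rcases lt_or_gt_of_ne hij with hlt | hgt
        · exact ⟨⟨i, by simpa [hds] using hi⟩, ⟨j, hj⟩, by simpa using hlt,
            by simp [List.get_eq_getElem, hds, heq], by simp [List.get_eq_getElem, ← hjm]⟩
        · exact ⟨⟨j, hj⟩, ⟨i, by simpa [hds] using hi⟩, by simpa using hgt,
            by simp [List.get_eq_getElem, ← hjm], by simp [List.get_eq_getElem, hds, heq]⟩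
      rw [List.duplicate_iff_two_le_count] at hdup
      omega
  · right
    have hdim : dim (.node r ts) = m + 1 := by
      rw [dim_node, if_neg hne, ← hds, ← hm, if_neg hc]
    have hcount : 2 ≤ ds.count m := by
      have : 0 < ds.count m := List.count_pos_iff.mpr hmem
      omega
    obtain ⟨n, m', hnm, h1, h2⟩ :=
      List.duplicate_iff_exists_distinct_get.mp (List.duplicate_iff_two_le_count.mpr hcount)
    refine ⟨m, hdim, hlem, n, m', by simpa using hnm, by simpa [hds] using m'.2, ?_, ?_⟩
    · have := h1
      simp only [List.get_eq_getElem, hds, List.getElem_map] at this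
      omega
    · have := h2
      simp only [List.get_eq_getElem, hds, List.getElem_map] at this
      omega


end LTree

section AuxProof

variable {P A : Type}

lemma kdim_eps {Q : Set (GRule P A)} {k : ℕ} {p : P} {a : A} {e d : ℕ}
    (he : e ≤ d) (hdk : d ≤ k)
    (h : Derivable (kdim Q k) (Ann.eq p e, a)) :
    Derivable (kdim Q k) (Ann.le p d, a) := by
  have hmem : ((Ann.le p d, a), [(Ann.eq p e, a)]) ∈ kdim Q k := by
    right; right; right; right
    exact ⟨p, a, d, e, he, hdk, rfl⟩
  exact Derivable.intro (Q := kdim Q k) ((Ann.le p d, a), [(Ann.eq p e, a)]) hmem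
    (by intro b hb; simp at hb; subst hb; exact h)

lemma fwd_deriv (Q : Set (GRule P A)) (k : ℕ) :
    ∀ n (T : LTree (GRule P A)) (x : GAtom P A), sizeOf T ≤ n →
      IsDeriv Q x T → T.dim ≤ k →
      Derivable (kdim Q k) (Ann.eq x.1 T.dim, x.2) := by
  intro n
  induction n using Nat.strong_induction_on with
  | _ n IH =>
  rintro T x hsz hT hdk
  cases hT with
  | node r ts hr hf =>
    -- child induction hypothesis
    have hchild : ∀ t ∈ ts, ∀ (y : GAtom P A), IsDeriv Q y t → t.dim ≤ k →
        Derivable (kdim Q k) (Ann.eq y.1 t.dim, y.2) := by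
      intro t ht y h1 h2
      have hlt : sizeOf t < n := by
        have h3 := List.sizeOf_lt_of_mem ht
        have h4 : sizeOf (LTree.node r ts) = 1 + sizeOf r + sizeOf ts := by
          rw [LTree.node.sizeOf_spec]
        omega
      exact IH (sizeOf t) hlt t y le_rfl h1 h2
    have hlen := List.Forall₂.length_eq hf
    have hget := (List.forall₂_iff_get.mp hf).2
    rcases Nat.lt_or_ge ts.length 2 with hlt2 | hge2
    · have hcase : ts.length = 0 ∨ ts.length = 1 := by omega
      rcases hcase with hl | hl
      · -- ts = []
        have hts : ts = [] := List.eq_nil_of_length_eq_zero hl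
        subst hts
        have hB : r.2 = [] := List.eq_nil_of_length_eq_zero (by omega)
        have hdim : (LTree.node r ([] : List (LTree (GRule P A)))).dim = 0 := by
          rw [LTree.dim_node]; simp
        rw [hdim]
        have hQ : (r.1, ([] : List (GAtom P A))) ∈ Q := by
          rw [← hB]; exact hr
        have hmem : ((Ann.eq r.1.1 0, r.1.2), ([] : List (GAtom (Ann P) A))) ∈ kdim Q k :=
          Or.inl ⟨r.1.1, r.1.2, hQ, rfl⟩
        exact Derivable.intro (Q := kdim Q k) ((Ann.eq r.1.1 0, r.1.2), []) hmem (by simp)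
      · -- ts = [t]
        obtain ⟨t, hts⟩ := List.length_eq_one_iff.mp hl
        subst hts
        obtain ⟨bq, hB⟩ := List.length_eq_one_iff.mp (show r.2.length = 1 by omega)
        have hdim : (LTree.node r [t]).dim = t.dim := by
          apply LTree.dim_node_of_unique r [t] t.dim 0 (by simp) (by simp)
          intro i hi hij; simp at hi; omega
        have hIsD : IsDeriv Q bq t := by
          have := hget 0 (by omega) (by simp)
          simpa [hB] using this
        have hdt : t.dim ≤ k := by rw [hdim] at hdk; exact hdk
        have hder := hchild t (by simp) bq hIsD hdt
        have hQ : (r.1, [(bq.1, bq.2)]) ∈ Q := by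
          show (r.1, [bq]) ∈ Q
          rw [← hB]; exact hr
        rw [hdim]
        have hmem : ((Ann.eq r.1.1 t.dim, r.1.2), [(Ann.eq bq.1 t.dim, bq.2)]) ∈ kdim Q k := by
          right; left
          exact ⟨r.1.1, r.1.2, bq.1, bq.2, t.dim, hdt, hQ, rfl⟩
        exact Derivable.intro (Q := kdim Q k)
          ((Ann.eq r.1.1 t.dim, r.1.2), [(Ann.eq bq.1 t.dim, bq.2)])
          hmem (by intro b hb; simp at hb; subst hb; exact hder)
    · -- at least two children
      have hne : ts ≠ [] := List.ne_nil_of_length_pos (by omega)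
      set B := r.2 with hBdef
      have hrQ : (r.1, B) ∈ Q := hr
      have hBlen : 1 < B.length := by omega
      set D := (LTree.node r ts).dim with hD
      have hdim_le : ∀ i (hi : i < ts.length), (ts[i]).dim ≤ k ∧
          IsDeriv Q (B[i]'(by omega)) (ts[i]) := by
        intro i hi
        constructor
        · have h1 : (ts[i]).dim ≤ (ts.map LTree.dim).foldr max 0 := by
            apply LTree.le_foldr_max'
            rw [List.mem_map]; exact ⟨ts[i], List.getElem_mem hi, rfl⟩
          have h2 : D = (LTree.node r ts).dim := rfl
          rw [LTree.dim_node, if_neg (by simpa using hne)] at h2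
          split at h2 <;> omega
        · have := hget i (by omega) hi
          simpa using this
      have hchild' : ∀ i (hi : i < ts.length) (e : ℕ), (ts[i]).dim = e → e ≤ k →
          Derivable (kdim Q k) (Ann.eq ((B[i]'(by omega)) : GAtom P A).1 e, (B[i]'(by omega)).2) := by
        intro i hi e he hek
        subst he
        exact hchild (ts[i]) (List.getElem_mem hi) (B[i]'(by omega)) (hdim_le i hi).2 hek
      rcases LTree.dim_node_cases r ts hne with ⟨j, hj, hjD, hother⟩ |
        ⟨m, hDm, hall, j₁, j₂, h12, hj2, hm1, hm2⟩
      · -- unique maximum: rule (2a) with d = D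
        have hD1 : 1 ≤ D := by
          by_contra hD0
          have hD0 : D = 0 := by omega
          have : ∃ i, i < ts.length ∧ i ≠ j := by
            rcases Nat.eq_zero_or_pos j with rfl | hjpos
            · exact ⟨1, by omega, by omega⟩
            · exact ⟨0, by omega, by omega⟩
          obtain ⟨i, hi, hij⟩ := this
          have := hother i hi hij
          omega
        have hbody : ∀ b ∈ (B.zipIdx.map Prod.swap).map (fun x =>
            ((if x.1 = j then Ann.eq x.2.1 D else Ann.le x.2.1 (D - 1)), x.2.2)),
            Derivable (kdim Q k) b := by
          intro b hb
          obtain ⟨i, hi, rfl⟩ := List.mem_iff_getElem.mp hb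
          simp only [List.length_map, List.length_zipIdx] at hi
          have hi' : i < ts.length := by omega
          simp only [List.getElem_map, List.getElem_zipIdx, Prod.swap_prod_mk, zero_add]
          obtain ⟨hik, hisD⟩ := hdim_le i hi'
          by_cases hij : i = j
          · rw [if_pos hij]
            refine hchild' i hi' D ?_ hdk
            subst hij
            rw [hD]
            exact hjD
          · rw [if_neg hij]
            have hlt := hother i hi' hij
            have hder := hchild' i hi' ((ts[i]).dim) rfl hik
            exact kdim_eps (by omega) (by omega) hder
        have hmem : ((Ann.eq r.1.1 D, r.1.2), (B.zipIdx.map Prod.swap).map (fun x =>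
            ((if x.1 = j then Ann.eq x.2.1 D else Ann.le x.2.1 (D - 1)), x.2.2))) ∈ kdim Q k := by
          right; right; left
          exact ⟨r.1.1, r.1.2, B, D, j, hrQ, hBlen, hD1, hdk, by omega, rfl⟩
        exact Derivable.intro (Q := kdim Q k) _ hmem hbody
      · -- two maxima: rule (2b) with d = D = m + 1
        have hD1 : 1 ≤ D := by omega
        have hbody : ∀ b ∈ (B.zipIdx.map Prod.swap).map (fun x =>
            ((if x.1 = j₁ ∨ x.1 = j₂ then Ann.eq x.2.1 (D - 1) else Ann.le x.2.1 (D - 1)), x.2.2)),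
            Derivable (kdim Q k) b := by
          intro b hb
          obtain ⟨i, hi, rfl⟩ := List.mem_iff_getElem.mp hb
          simp only [List.length_map, List.length_zipIdx] at hi
          have hi' : i < ts.length := by omega
          simp only [List.getElem_map, List.getElem_zipIdx, Prod.swap_prod_mk, zero_add]
          obtain ⟨hik, hisD⟩ := hdim_le i hi'
          by_cases hij : i = j₁ ∨ i = j₂
          · rw [if_pos hij]
            refine hchild' i hi' (D - 1) ?_ (by omega)
            have hdi : (ts[i]).dim = m := by
              rcases hij with rfl | rfl
              · exact hm1
              · exact hm2
            omega
          · rw [if_neg hij]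
            have hle := hall i hi'
            have hder := hchild' i hi' ((ts[i]).dim) rfl hik
            exact kdim_eps (by omega) (by omega) hder
        have hmem : ((Ann.eq r.1.1 D, r.1.2), (B.zipIdx.map Prod.swap).map (fun x =>
            ((if x.1 = j₁ ∨ x.1 = j₂ then Ann.eq x.2.1 (D - 1) else Ann.le x.2.1 (D - 1)), x.2.2)))
            ∈ kdim Q k := by
          right; right; right; left
          exact ⟨r.1.1, r.1.2, B, D, j₁, j₂, hrQ, hBlen, hD1, hdk, h12, by omega, rfl⟩
        exact Derivable.intro (Q := kdim Q k) _ hmem hbody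

end AuxProof


section BwdProof

variable {P A : Type}

lemma bwd_deriv (Q : Set (GRule P A)) (k : ℕ) :
    ∀ x, Derivable (kdim Q k) x →
      (∀ (p : P) (a : A) (d : ℕ), x = (Ann.eq p d, a) →
        ∃ T : LTree (GRule P A), IsDeriv Q (p, a) T ∧ T.dim = d) ∧
      (∀ (p : P) (a : A) (d : ℕ), x = (Ann.le p d, a) →
        ∃ T : LTree (GRule P A), IsDeriv Q (p, a) T ∧ T.dim ≤ d) := by
  intro x hx
  induction hx with
  | intro r hr hb ih =>
    rcases hr with ⟨p0, a0, hQ, hR⟩ | ⟨p0, a0, q, b, d0, hdk, hQ, hR⟩ |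
      ⟨p0, a0, B, d0, j, hQ, hBlen, hd1, hdk, hj, hR⟩ |
      ⟨p0, a0, B, d0, j₁, j₂, hQ, hBlen, hd1, hdk, h12, hj2, hR⟩ |
      ⟨p0, a0, d0, e, he, hdk, hR⟩
    -- case (1) facts
    · subst hR
      constructor
      · rintro p a d heq
        simp only [Prod.mk.injEq, Ann.eq.injEq] at heq
        obtain ⟨⟨rfl, rfl⟩, rfl⟩ := heq
        refine ⟨.node ((p0, a0), []) [], IsDeriv.node _ _ hQ List.Forall₂.nil, ?_⟩
        rw [LTree.dim_node]; simp
      · rintro p a d heq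
        simp at heq
    -- case (1) linear
    · subst hR
      obtain ⟨T, hT, hdim⟩ := (ih (Ann.eq q d0, b) (by simp)).1 q b d0 rfl
      constructor
      · rintro p a d heq
        simp only [Prod.mk.injEq, Ann.eq.injEq] at heq
        obtain ⟨⟨rfl, rfl⟩, rfl⟩ := heq
        refine ⟨.node ((p0, a0), [(q, b)]) [T],
          IsDeriv.node _ _ hQ (List.Forall₂.cons hT List.Forall₂.nil), ?_⟩
        rw [LTree.dim_node_of_unique ((p0, a0), [(q, b)]) [T] d0 0 (by simp)
          (by simpa using hdim)]
        intro i hi hij; simp at hi; omega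
      · rintro p a d heq
        simp at heq
    -- case (2a)
    · subst hR
      have hspec : ∀ i : Fin B.length,
          ∃ T : LTree (GRule P A), IsDeriv Q ((B[i]).1, (B[i]).2) T ∧
            ((i : ℕ) = j → T.dim = d0) ∧ ((i : ℕ) ≠ j → T.dim ≤ d0 - 1) := by
        rintro ⟨i, hi⟩
        have hbmem : (((if i = j then Ann.eq (B[i]).1 d0 else Ann.le (B[i]).1 (d0 - 1)),
            (B[i]).2)) ∈ (B.zipIdx.map Prod.swap).map (fun x =>
              ((if x.1 = j then Ann.eq x.2.1 d0 else Ann.le x.2.1 (d0 - 1)), x.2.2)) := by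
          rw [List.mem_iff_getElem]
          exact ⟨i, by simpa using hi, by simp [List.getElem_zipIdx]⟩
        by_cases hij : i = j
        · obtain ⟨T, hT, hdim⟩ := (ih _ hbmem).1 (B[i]).1 (B[i]).2 d0 (by rw [if_pos hij])
          exact ⟨T, hT, fun _ => hdim, fun h => absurd hij h⟩
        · obtain ⟨T, hT, hdim⟩ := (ih _ hbmem).2 (B[i]).1 (B[i]).2 (d0 - 1) (by rw [if_neg hij])
          exact ⟨T, hT, fun h => absurd h hij, fun _ => hdim⟩
      choose g hg using hspec
      set ts : List (LTree (GRule P A)) := List.ofFn g with hts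
      have hlen : ts.length = B.length := by simp [hts]
      have htsget : ∀ i (hi : i < B.length), ts[i]'(by omega) = g ⟨i, hi⟩ := by
        intro i hi
        simp [hts]
      have hforall : List.Forall₂ (IsDeriv Q) B ts := by
        rw [List.forall₂_iff_get]
        refine ⟨hlen.symm, ?_⟩
        intro i h1 h2
        simp only [List.get_eq_getElem]
        rw [htsget i h1]
        exact (hg ⟨i, h1⟩).1
      constructor
      · rintro p a d heq
        simp only [Prod.mk.injEq, Ann.eq.injEq] at heq
        obtain ⟨⟨rfl, rfl⟩, rfl⟩ := heq
        refine ⟨.node ((p0, a0), B) ts, IsDeriv.node _ _ hQ hforall, ?_⟩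
        apply LTree.dim_node_of_unique ((p0, a0), B) ts d0 j (by omega)
        · rw [htsget j hj]
          exact (hg ⟨j, hj⟩).2.1 rfl
        · intro i hi hij
          have hi' : i < B.length := by omega
          rw [htsget i hi']
          have := (hg ⟨i, hi'⟩).2.2 hij
          omega
      · rintro p a d heq
        simp at heq
    -- case (2b)
    · subst hR
      have hspec : ∀ i : Fin B.length,
          ∃ T : LTree (GRule P A), IsDeriv Q ((B[i]).1, (B[i]).2) T ∧
            T.dim ≤ d0 - 1 ∧ (((i : ℕ) = j₁ ∨ (i : ℕ) = j₂) → T.dim = d0 - 1) := by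
        rintro ⟨i, hi⟩
        have hbmem : (((if i = j₁ ∨ i = j₂ then Ann.eq (B[i]).1 (d0 - 1)
            else Ann.le (B[i]).1 (d0 - 1)), (B[i]).2)) ∈ (B.zipIdx.map Prod.swap).map (fun x =>
              ((if x.1 = j₁ ∨ x.1 = j₂ then Ann.eq x.2.1 (d0 - 1)
                else Ann.le x.2.1 (d0 - 1)), x.2.2)) := by
          rw [List.mem_iff_getElem]
          exact ⟨i, by simpa using hi, by simp [List.getElem_zipIdx]⟩
        by_cases hij : i = j₁ ∨ i = j₂
        · obtain ⟨T, hT, hdim⟩ :=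
            (ih _ hbmem).1 (B[i]).1 (B[i]).2 (d0 - 1) (by rw [if_pos hij])
          exact ⟨T, hT, le_of_eq hdim, fun _ => hdim⟩
        · obtain ⟨T, hT, hdim⟩ :=
            (ih _ hbmem).2 (B[i]).1 (B[i]).2 (d0 - 1) (by rw [if_neg hij])
          exact ⟨T, hT, hdim, fun h => absurd h hij⟩
      choose g hg using hspec
      set ts : List (LTree (GRule P A)) := List.ofFn g with hts
      have hlen : ts.length = B.length := by simp [hts]
      have htsget : ∀ i (hi : i < B.length), ts[i]'(by omega) = g ⟨i, hi⟩ := by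
        intro i hi
        simp [hts]
      have hforall : List.Forall₂ (IsDeriv Q) B ts := by
        rw [List.forall₂_iff_get]
        refine ⟨hlen.symm, ?_⟩
        intro i h1 h2
        simp only [List.get_eq_getElem]
        rw [htsget i h1]
        exact (hg ⟨i, h1⟩).1
      constructor
      · rintro p a d heq
        simp only [Prod.mk.injEq, Ann.eq.injEq] at heq
        obtain ⟨⟨rfl, rfl⟩, rfl⟩ := heq
        refine ⟨.node ((p0, a0), B) ts, IsDeriv.node _ _ hQ hforall, ?_⟩
        have h2b := LTree.dim_node_of_two ((p0, a0), B) ts (d0 - 1) j₁ j₂ h12 (by omega)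
          (by rw [htsget j₁ (by omega)]; exact (hg ⟨j₁, by omega⟩).2.2 (Or.inl rfl))
          (by rw [htsget j₂ (by omega)]; exact (hg ⟨j₂, by omega⟩).2.2 (Or.inr rfl))
          (by intro i hi
              rw [htsget i (by omega)]
              exact (hg ⟨i, by omega⟩).2.1)
        rw [h2b]
        omega
      · rintro p a d heq
        simp at heq
    -- case (3) epsilon
    · subst hR
      obtain ⟨T, hT, hdim⟩ := (ih (Ann.eq p0 e, a0) (by simp)).1 p0 a0 e rfl
      constructor
      · rintro p a d heq
        simp at heq
      · rintro p a d heq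
        simp only [Prod.mk.injEq, Ann.le.injEq] at heq
        obtain ⟨⟨rfl, rfl⟩, rfl⟩ := heq
        exact ⟨T, hT, by omega⟩

end BwdProof


/-- Let `Q` be a ground Horn program, `k ∈ ℕ` and `0 ≤ d ≤ k`. Then: (i) the
annotated atom `(p^{=d}, a)` is derivable in `Q^{≤k}` if and only if `(p, a)` has a
derivation tree in `Q` of dimension exactly `d`; (ii) the annotated atom
`(p^{≤d}, a)` is derivable in `Q^{≤k}` if and only if `(p, a)` has a derivation
tree in `Q` of dimension at most `d`. -/
theorem derivable_kdim_iff {P A : Type} (Q : Set (GRule P A)) (k : ℕ)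
    (p : P) (a : A) (d : ℕ) (hd : d ≤ k) :
    (Derivable (kdim Q k) (Ann.eq p d, a) ↔
      ∃ T : LTree (GRule P A), IsDeriv Q (p, a) T ∧ T.dim = d) ∧
    (Derivable (kdim Q k) (Ann.le p d, a) ↔
      ∃ T : LTree (GRule P A), IsDeriv Q (p, a) T ∧ T.dim ≤ d) := by
  constructor
  · constructor
    · intro h
      exact (bwd_deriv Q k _ h).1 p a d rfl
    · rintro ⟨T, hT, hdim⟩
      have h1 := fwd_deriv Q k (sizeOf T) T (p, a) le_rfl hT (by omega)
      rw [hdim] at h1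
      exact h1
  · constructor
    · intro h
      exact (bwd_deriv Q k _ h).2 p a d rfl
    · rintro ⟨T, hT, hle⟩
      have h1 := fwd_deriv Q k (sizeOf T) T (p, a) le_rfl hT (by omega)
      exact kdim_eps hle hd h1
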